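/- Let κ be a continuous and concordance order preserving functional on d-dimensional copulas and let 𝒟 be a nonempty compact set of copulas. Then m(κ,𝒟) contains at least one minimal element of (𝒟,⪯); in particular, the set m(κ,𝒞) of minimizers of κ over all d-dimensional copulas contains at least one minimal copula. -/
import Mathlib


open MeasureTheory unitInterval

/-- The unit cube `[0,1]^d`, modelled as functions `Fin d → [0,1]`. -/
abbrev Cube (d : ℕ) : Type := Fin d → unitInterval

/-- `η_K(u,v)`: the vector whose `k`-th coordinate is `v k` if `k ∈ K` and `u k` otherwise. -/
def etaK {d : ℕ} (K : Finset (Fin d)) (u v : Cube d) : Cube d :=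
  fun k => if k ∈ K then v k else u k

/-- `C` is a `d`-dimensional copula. -/
def IsCopula {d : ℕ} (C : Cube d → ℝ) : Prop :=
  (∀ u v : Cube d, u ≤ v →
      0 ≤ ∑ K : Finset (Fin d), (-1 : ℝ) ^ (d - K.card) * C (etaK K u v)) ∧
  (∀ k : Fin d, ∀ u : Cube d, C (etaK {k} u 0) = 0) ∧
  (∀ k : Fin d, ∀ u : Cube d, C (etaK {k} 1 u) = (u k : ℝ))

/-- The reflection `ν_K`, i.e. the composition of the commuting reflections `ν_k`, `k ∈ K`,
written in closed (inclusion–exclusion) form: the coordinates in `L ⊆ K` are reflected to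
`1 - u k`, the remaining coordinates of `K` are set to `1`. -/
noncomputable def nuK {d : ℕ} (K : Finset (Fin d)) (C : Cube d → ℝ) : Cube d → ℝ :=
  fun u => ∑ L ∈ K.powerset, (-1 : ℝ) ^ L.card *
    C (fun k => if k ∈ L then unitInterval.symm (u k) else if k ∈ K then 1 else u k)

/-- The total reflection `τ = ν_{{1,...,d}}`, sending a copula to its survival copula. -/
noncomputable def survival {d : ℕ} (C : Cube d → ℝ) : Cube d → ℝ := nuK Finset.univ C

/-- The concordance order `C ⪯ D`: `C(u) ≤ D(u)` and `(τ C)(u) ≤ (τ D)(u)` for all `u`. -/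
def ConcLE {d : ℕ} (C D : Cube d → ℝ) : Prop :=
  (∀ u, C u ≤ D u) ∧ (∀ u, survival C u ≤ survival D u)

/-- A minimal copula: a minimal element of the set of all copulas w.r.t. concordance order. -/
def IsMinimalCopula {d : ℕ} (C : Cube d → ℝ) : Prop :=
  IsCopula C ∧ ∀ D : Cube d → ℝ, IsCopula D → ConcLE D C → D = C

/-- `μ` is the copula measure `Q^C` of `C`: a Borel probability measure on the cube
with `μ [0,u] = C u` for all `u`. -/
def IsCopulaMeasure {d : ℕ} (C : Cube d → ℝ) (μ : Measure (Cube d)) : Prop :=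
  IsProbabilityMeasure μ ∧ ∀ u : Cube d, μ (Set.Icc 0 u) = ENNReal.ofReal (C u)

/-- `C` is `K`-countermonotonic: there are strictly increasing continuous functions
`g k : [0,1] → ℝ` (`k ∈ K`) and `c : ℝ` with `Q^C {u : ∑ k ∈ K, g k (u k) = c} = 1`. -/
def IsKCM {d : ℕ} (K : Finset (Fin d)) (C : Cube d → ℝ) : Prop :=
  ∃ (g : Fin d → unitInterval → ℝ) (c : ℝ),
    (∀ k ∈ K, StrictMono (g k) ∧ Continuous (g k)) ∧
    ∃ μ : Measure (Cube d), IsCopulaMeasure C μ ∧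
      μ {u : Cube d | ∑ k ∈ K, g k (u k) = c} = 1

/-- `C` is Kendall-countermonotonic (`τ`-CM):
`min (C u) ((τ C)(1 - u)) = 0` for every `u` with `0 < u < 1` coordinatewise. -/
noncomputable def IsTauCM {d : ℕ} (C : Cube d → ℝ) : Prop :=
  ∀ u : Cube d, (∀ k, 0 < u k ∧ u k < 1) →
    min (C u) (survival C (fun k => unitInterval.symm (u k))) = 0

/-- The upper Fréchet–Hoeffding bound `M(u) = min {u_1, ..., u_d}`. -/
noncomputable def Mcop {d : ℕ} : Cube d → ℝ :=
  fun u => sInf (Set.range fun k => (u k : ℝ))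

/-- `κ` is continuous: `κ (Cₙ) → κ C` whenever copulas `Cₙ` converge uniformly to a copula `C`. -/
def ContinuousFunctional {d : ℕ} (κ : (Cube d → ℝ) → ℝ) : Prop :=
  ∀ (Cs : ℕ → Cube d → ℝ) (C : Cube d → ℝ), (∀ n, IsCopula (Cs n)) → IsCopula C →
    TendstoUniformly Cs C Filter.atTop →
    Filter.Tendsto (fun n => κ (Cs n)) Filter.atTop (nhds (κ C))

/-- `κ` is concordance order preserving. -/
def ConcPreserving {d : ℕ} (κ : (Cube d → ℝ) → ℝ) : Prop :=
  ∀ C D : Cube d → ℝ, IsCopula C → IsCopula D → ConcLE C D → κ C ≤ κ D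

/-- `κ` is strictly concordance order preserving. -/
def StrictConcPreserving {d : ℕ} (κ : (Cube d → ℝ) → ℝ) : Prop :=
  ConcPreserving κ ∧
  ∀ C D : Cube d → ℝ, IsCopula C → IsCopula D → ConcLE C D → C ≠ D → κ C < κ D

/-- `m(κ,𝒟)`: the set of all `D ∈ 𝒟` with `κ D = inf_{C ∈ 𝒟} κ C`. -/
noncomputable def MinSet {d : ℕ} (κ : (Cube d → ℝ) → ℝ) (𝒟 : Set (Cube d → ℝ)) :
    Set (Cube d → ℝ) :=
  {D ∈ 𝒟 | κ D = sInf (κ '' 𝒟)}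

section CopulaBasics

variable {d : ℕ} {C : Cube d → ℝ}

lemma copula_zero (h : IsCopula C) {u : Cube d} (k : Fin d) (hk : u k = 0) :
    C u = 0 := by
  have h2 := h.2.1 k u
  have he : etaK {k} u 0 = u := by
    funext j
    simp only [etaK, Finset.mem_singleton]
    split_ifs with hj
    · subst hj; exact hk.symm
    · rfl
  rwa [he] at h2

lemma boxS (h : IsCopula C) (S : Finset (Fin d)) (u v : Cube d)
    (huv : ∀ j ∈ S, u j ≤ v j) :
    0 ≤ ∑ J ∈ S.powerset, (-1 : ℝ) ^ (S.card - J.card) * C (etaK J u v) := by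
  classical
  set a : Cube d := fun j => if j ∈ S then u j else 0 with ha
  set b : Cube d := fun j => if j ∈ S then v j else u j with hb
  have hab : a ≤ b := by
    intro j
    by_cases hj : j ∈ S
    · simp only [ha, hb, if_pos hj]; exact huv j hj
    · simp only [ha, hb, if_neg hj]; exact unitInterval.nonneg'
  have h0 := h.1 a b hab
  have key : ∑ K : Finset (Fin d), (-1 : ℝ) ^ (d - K.card) * C (etaK K a b)
      = ∑ J ∈ S.powerset, (-1 : ℝ) ^ (S.card - J.card) * C (etaK J u v) := by
    rw [show (Finset.univ : Finset (Finset (Fin d))) = Finset.univ.powerset by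
      rw [Finset.powerset_univ]]
    rw [← Finset.sum_filter_of_ne (p := fun K => Sᶜ ⊆ K)
      (f := fun K => (-1 : ℝ) ^ (d - K.card) * C (etaK K a b)) ?vanish]
    case vanish =>
      intro K _ hne
      by_contra hKS
      apply hne
      obtain ⟨j, hjc, hjK⟩ := Finset.not_subset.mp hKS
      have hjS : j ∉ S := Finset.mem_compl.mp hjc
      have h0' : etaK K a b j = 0 := by
        simp only [etaK, if_neg hjK, ha, if_neg hjS]
      show (-1 : ℝ) ^ (d - K.card) * C (etaK K a b) = 0
      rw [copula_zero h j h0', mul_zero]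
    refine Finset.sum_bij' (fun K _ => K ∩ S) (fun J _ => Sᶜ ∪ J) ?_ ?_ ?_ ?_ ?_
    · intro K hK
      exact Finset.mem_powerset.mpr Finset.inter_subset_right
    · intro J hJ
      simp only [Finset.mem_filter, Finset.mem_powerset] at hJ ⊢
      exact ⟨Finset.subset_univ _, Finset.subset_union_left⟩
    · intro K hK
      simp only [Finset.mem_filter] at hK
      ext j
      simp only [Finset.mem_union, Finset.mem_inter, Finset.mem_compl]
      constructor
      · rintro (hj | ⟨hjK, _⟩)
        · exact hK.2 (Finset.mem_compl.mpr hj)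
        · exact hjK
      · intro hjK
        by_cases hjS : j ∈ S
        · exact Or.inr ⟨hjK, hjS⟩
        · exact Or.inl hjS
    · intro J hJ
      simp only [Finset.mem_powerset] at hJ
      ext j
      simp only [Finset.mem_inter, Finset.mem_union, Finset.mem_compl]
      constructor
      · rintro ⟨h1 | h1, h2⟩
        · exact absurd h2 h1
        · exact h1
      · intro hj; exact ⟨Or.inr hj, hJ hj⟩
    · intro K hK
      simp only [Finset.mem_filter] at hK
      have hsub : Sᶜ ⊆ K := hK.2
      have hcards : K.card = (d - S.card) + (K ∩ S).card := by
        have hdisj : Disjoint (Sᶜ) (K ∩ S) := by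
          refine Finset.disjoint_left.mpr ?_
          intro j hj hj2
          exact (Finset.mem_compl.mp hj) (Finset.mem_inter.mp hj2).2
        have hKeq : K = Sᶜ ∪ (K ∩ S) := by
          ext j
          simp only [Finset.mem_union, Finset.mem_compl, Finset.mem_inter]
          constructor
          · intro hj; by_cases hjS : j ∈ S
            · exact Or.inr ⟨hj, hjS⟩
            · exact Or.inl hjS
          · rintro (hj | hj)
            · exact hsub (Finset.mem_compl.mpr hj)
            · exact hj.1
        have h1 : K.card = Sᶜ.card + (K ∩ S).card := by
          conv_lhs => rw [hKeq]
          exact Finset.card_union_of_disjoint hdisj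
        rw [h1, Finset.card_compl, Fintype.card_fin]
      have hJS : (K ∩ S).card ≤ S.card := Finset.card_le_card Finset.inter_subset_right
      have hSd : S.card ≤ d := by
        simpa [Fintype.card_fin] using Finset.card_le_univ S
      have hexp : d - K.card = S.card - (K ∩ S).card := by omega
      have heta : etaK K a b = etaK (K ∩ S) u v := by
        funext j
        by_cases hjK : j ∈ K <;> by_cases hjS : j ∈ S
        · simp [etaK, hjK, hjS, hb]
        · simp [etaK, hjK, hjS, hb]
        · simp [etaK, hjK, hjS, ha]
        · exact absurd (hsub (Finset.mem_compl.mpr hjS)) hjK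
      rw [hexp, heta]
  rw [key] at h0
  exact h0

end CopulaBasics
section CopulaLip

variable {d : ℕ} {C : Cube d → ℝ}

lemma etaK_empty (u v : Cube d) : etaK ∅ u v = u := by
  funext i; simp [etaK]

lemma copula_step (h : IsCopula C) {u v : Cube d} {j : Fin d} (hj : u j ≤ v j) :
    C u ≤ C (etaK {j} u v) := by
  have h1 := boxS h {j} u v (by
    intro i hi
    rw [Finset.mem_singleton] at hi
    subst hi; exact hj)
  rw [show ({j} : Finset (Fin d)) = insert j ∅ from rfl,
    Finset.sum_powerset_insert (by simp)] at h1
  simp only [Finset.powerset_empty, Finset.sum_singleton, etaK_empty,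
    Finset.card_empty, Finset.card_insert_of_notMem (Finset.notMem_empty j),
    Finset.insert_empty] at h1
  norm_num at h1
  linarith

lemma copula_mono (h : IsCopula C) : Monotone C := by
  intro u v huv
  classical
  have key : ∀ T : Finset (Fin d), C u ≤ C (fun j => if j ∈ T then v j else u j) := by
    intro T
    induction T using Finset.induction_on with
    | empty => simp
    | @insert j T hj ih =>
      refine ih.trans ?_
      set w : Cube d := fun i => if i ∈ T then v i else u i with hw
      have hwj : w j ≤ v j := by
        simp only [hw, if_neg hj]; exact huv j
      have hstep := copula_step h (v := v) hwj
      have he : etaK {j} w v = fun i => if i ∈ insert j T then v i else u i := by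
        funext i
        by_cases hij : i = j
        · subst hij; simp [etaK]
        · simp [etaK, hij, hw, Finset.mem_insert]
      rwa [he] at hstep
  have := key Finset.univ
  simpa using this

lemma copula_pair (h : IsCopula C) {u v : Cube d} {j k : Fin d} (hjk : j ≠ k)
    (hj : u j ≤ v j) (hk : u k ≤ v k) :
    C (etaK {j} u v) + C (etaK {k} u v) ≤ C u + C (etaK {j, k} u v) := by
  have h1 := boxS h {j, k} u v (by
    intro i hi
    rw [Finset.mem_insert, Finset.mem_singleton] at hi
    rcases hi with hi | hi <;> (subst hi; assumption))
  have hjk' : j ∉ ({k} : Finset (Fin d)) := by simpa using hjk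
  rw [show ({j, k} : Finset (Fin d)) = insert j {k} from rfl,
    Finset.sum_powerset_insert hjk'] at h1
  rw [show ({k} : Finset (Fin d)) = insert k ∅ from rfl,
    Finset.sum_powerset_insert (by simp), Finset.sum_powerset_insert (by simp)] at h1
  simp only [Finset.powerset_empty, Finset.sum_singleton, etaK_empty,
    Finset.insert_empty] at h1
  have hcard : (insert j ({k} : Finset (Fin d))).card = 2 := by
    rw [Finset.card_insert_of_notMem hjk', Finset.card_singleton]
  rw [hcard] at h1
  simp only [Finset.card_empty, Finset.card_singleton] at h1
  norm_num at h1
  linarith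

end CopulaLip
section CopulaLip2

variable {d : ℕ} {C : Cube d → ℝ}

open Function

lemma copula_lip_step (h : IsCopula C) (u : Cube d) (k : Fin d) (t : unitInterval)
    (hk : u k ≤ t) :
    C (Function.update u k t) - C u ≤ (t : ℝ) - (u k : ℝ) := by
  classical
  set v' : Cube d := fun i => if i = k then t else 1 with hv'
  have key : ∀ T : Finset (Fin d),
      C (Function.update u k t) - C u ≤
      C (Function.update (fun i => if i ∈ T ∧ i ≠ k then 1 else u i) k t)
        - C (fun i => if i ∈ T ∧ i ≠ k then 1 else u i) := by
    intro T
    induction T using Finset.induction_on with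
    | empty =>
      have : (fun i => if i ∈ (∅ : Finset (Fin d)) ∧ i ≠ k then 1 else u i) = u := by
        funext i; simp
      rw [this]
    | @insert j T hj ih =>
      set wT : Cube d := fun i => if i ∈ T ∧ i ≠ k then 1 else u i with hwT
      set wI : Cube d := fun i => if i ∈ insert j T ∧ i ≠ k then 1 else u i with hwI
      by_cases hjk : j = k
      · have : wI = wT := by
          funext i
          by_cases hij : i = j
          · subst hij; subst hjk; simp [hwI, hwT]
          · simp [hwI, hwT, Finset.mem_insert, hij]
        rw [this]; exact ih
      · -- use copula_pair with base wT and v'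
        have hwTk : wT k = u k := by simp [hwT]
        have h1 : wT j ≤ v' j := by
          simp only [hv', if_neg hjk]
          exact unitInterval.le_one'
        have h2 : wT k ≤ v' k := by
          rw [hwTk]; simp only [hv', if_pos rfl]; exact hk
        have hp := copula_pair h hjk h1 h2
        have e1 : etaK {j} wT v' = wI := by
          funext i
          by_cases hij : i = j
          · subst hij
            simp [etaK, hv', hwI, hjk, hwT]
          · simp [etaK, hij, hwI, hwT, Finset.mem_insert]
        have e2 : etaK {k} wT v' = Function.update wT k t := by
          funext i
          by_cases hik : i = k
          · subst hik; simp [etaK, hv', Function.update]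
          · simp [etaK, hik, Function.update, hv']
        have e3 : etaK {j, k} wT v' = Function.update wI k t := by
          funext i
          by_cases hik : i = k
          · subst hik; simp [etaK, hv', Function.update]
          · by_cases hij : i = j
            · subst hij
              simp [etaK, hv', hik, Function.update, hwI, hwT, Finset.mem_insert]
            · simp [etaK, hij, hik, Function.update, hwI, hwT, Finset.mem_insert]
        rw [e1, e2, e3] at hp
        have : C (Function.update wT k t) - C wT ≤ C (Function.update wI k t) - C wI := by
          linarith
        exact ih.trans this
  have hfin := key Finset.univ
  set wU : Cube d := fun i => if i ∈ (Finset.univ : Finset (Fin d)) ∧ i ≠ k then 1 else u i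
    with hwU
  have hCwU : C wU = (u k : ℝ) := by
    have : wU = etaK {k} 1 u := by
      funext i
      by_cases hik : i = k
      · subst hik; simp [hwU, etaK]
      · simp [hwU, etaK, hik]
    rw [this]; exact h.2.2 k u
  have hCwUt : C (Function.update wU k t) = (t : ℝ) := by
    have : Function.update wU k t = etaK {k} 1 (fun _ => t) := by
      funext i
      by_cases hik : i = k
      · subst hik; simp [Function.update, etaK]
      · simp [hwU, etaK, hik, Function.update]
    rw [this]; exact h.2.2 k (fun _ => t)
  rw [hCwU, hCwUt] at hfin
  exact hfin

lemma copula_lip1 (h : IsCopula C) (u : Cube d) (k : Fin d) (t : unitInterval) :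
    |C (Function.update u k t) - C u| ≤ |(t : ℝ) - (u k : ℝ)| := by
  rcases le_total (u k) t with hk | hk
  · have h1 := copula_lip_step h u k t hk
    have h2 : C u ≤ C (Function.update u k t) := by
      apply copula_mono h
      intro i
      by_cases hik : i = k
      · subst hik; simp [Function.update]; exact hk
      · simp [Function.update, hik]
    rw [abs_of_nonneg (by linarith), abs_of_nonneg (sub_nonneg.mpr (by exact_mod_cast hk))]
    exact h1
  · have hupd : Function.update (Function.update u k t) k (u k) = u := by
      rw [Function.update_idem, Function.update_eq_self]
    have hk' : (Function.update u k t) k ≤ u k := by simpa using hk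
    have h1 := copula_lip_step h (Function.update u k t) k (u k) hk'
    rw [hupd] at h1
    have h2 : C (Function.update u k t) ≤ C u := by
      apply copula_mono h
      intro i
      by_cases hik : i = k
      · subst hik; simp [Function.update]; exact hk
      · simp [Function.update, hik]
    have h3 : (Function.update u k t) k = t := by simp
    rw [h3] at h1
    rw [abs_of_nonpos (by linarith), abs_of_nonpos (sub_nonpos.mpr (by exact_mod_cast hk))]
    linarith

lemma copula_lip (h : IsCopula C) (u v : Cube d) :
    |C u - C v| ≤ ∑ k, |((u k : ℝ)) - ((v k : ℝ))| := by
  classical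
  have key : ∀ T : Finset (Fin d),
      |C (fun j => if j ∈ T then u j else v j) - C v| ≤ ∑ k ∈ T, |((u k : ℝ)) - ((v k : ℝ))| := by
    intro T
    induction T using Finset.induction_on with
    | empty => simp
    | @insert j T hj ih =>
      set wT : Cube d := fun i => if i ∈ T then u i else v i with hwT
      have he : (fun i => if i ∈ insert j T then u i else v i) = Function.update wT j (u j) := by
        funext i
        by_cases hij : i = j
        · subst hij; simp [Function.update]
        · simp [Function.update, hij, hwT, Finset.mem_insert]
      rw [he, Finset.sum_insert hj]
      have h1 := copula_lip1 h wT j (u j)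
      have h2 : wT j = v j := by simp [hwT, hj]
      rw [h2] at h1
      calc |C (Function.update wT j (u j)) - C v|
          ≤ |C (Function.update wT j (u j)) - C wT| + |C wT - C v| := abs_sub_le _ _ _
        _ ≤ |((u j : ℝ)) - ((v j : ℝ))| + ∑ k ∈ T, |((u k : ℝ)) - ((v k : ℝ))| := by
            exact add_le_add h1 ih
  have := key Finset.univ
  simpa using this

lemma copula_nonneg (h : IsCopula C) (hd : 0 < d) (u : Cube d) : 0 ≤ C u := by
  have k : Fin d := ⟨0, hd⟩
  have h1 : C (Function.update u k 0) ≤ C u := by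
    apply copula_mono h
    intro i
    by_cases hik : i = k
    · subst hik; simp only [Function.update, dif_pos rfl]; exact unitInterval.nonneg'
    · simp [Function.update, hik]
  have h2 : C (Function.update u k 0) = 0 := copula_zero h k (by simp)
  linarith

lemma copula_le_one (h : IsCopula C) (hd : 0 < d) (u : Cube d) : C u ≤ 1 := by
  have k : Fin d := ⟨0, hd⟩
  have h1 : C u ≤ C (etaK {k} 1 u) := by
    apply copula_mono h
    intro i
    by_cases hik : i = k
    · subst hik; simp [etaK]
    · simp [etaK, hik]; exact unitInterval.le_one'
  rw [h.2.2 k u] at h1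
  exact h1.trans (by exact_mod_cast unitInterval.le_one')

end CopulaLip2
section Topology

open Topology

variable {d : ℕ}

lemma isClosed_isCopula : IsClosed {C : Cube d → ℝ | IsCopula C} := by
  have hset : {C : Cube d → ℝ | IsCopula C} =
      (⋂ (p : Cube d × Cube d) (_ : p.1 ≤ p.2),
        {C : Cube d → ℝ |
          0 ≤ ∑ K : Finset (Fin d), (-1 : ℝ) ^ (d - K.card) * C (etaK K p.1 p.2)}) ∩
      ((⋂ (k : Fin d) (u : Cube d), {C : Cube d → ℝ | C (etaK {k} u 0) = 0}) ∩
       (⋂ (k : Fin d) (u : Cube d), {C : Cube d → ℝ | C (etaK {k} 1 u) = (u k : ℝ)})) := by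
    ext C
    simp only [Set.mem_setOf_eq, Set.mem_inter_iff, Set.mem_iInter]
    constructor
    · rintro ⟨h1, h2, h3⟩
      exact ⟨fun p hp => h1 p.1 p.2 hp, fun k u => h2 k u, fun k u => h3 k u⟩
    · rintro ⟨h1, h2, h3⟩
      exact ⟨fun u v h => h1 (u, v) h, h2, h3⟩
  rw [hset]
  refine IsClosed.inter ?_ (IsClosed.inter ?_ ?_)
  · refine isClosed_iInter fun p => isClosed_iInter fun hp => ?_
    exact isClosed_le continuous_const
      (continuous_finset_sum _ fun K _ => continuous_const.mul (continuous_apply _))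
  · refine isClosed_iInter fun k => isClosed_iInter fun u => ?_
    exact isClosed_eq (continuous_apply _) continuous_const
  · refine isClosed_iInter fun k => isClosed_iInter fun u => ?_
    exact isClosed_eq (continuous_apply _) continuous_const

lemma isCompact_copulas (hd : 0 < d) :
    IsCompact (UniformFun.ofFun '' {C : Cube d → ℝ | IsCopula C} :
      Set (UniformFun (Cube d) ℝ)) := by
  classical
  set P : Set (Cube d → ℝ) := {C | IsCopula C} with hPdef
  have hPQ : P ⊆ Set.pi Set.univ (fun _ : Cube d => Set.Icc (0:ℝ) 1) := by
    intro C hC u _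
    exact ⟨copula_nonneg hC hd u, copula_le_one hC hd u⟩
  have hQ : IsCompact (Set.pi Set.univ (fun _ : Cube d => Set.Icc (0:ℝ) 1)) :=
    isCompact_univ_pi fun _ => isCompact_Icc
  have hP : IsCompact P := hQ.of_isClosed_subset isClosed_isCopula hPQ
  haveI : CompactSpace P := isCompact_iff_compactSpace.mp hP
  have heq : Equicontinuous (fun Cp : P => (Cp : Cube d → ℝ)) := by
    apply Metric.equicontinuous_of_continuity_modulus (fun t => (d : ℝ) * t)
    · have h0 : Filter.Tendsto (fun t : ℝ => (d : ℝ) * t) (nhds 0) (nhds ((d : ℝ) * 0)) :=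
        (continuous_const.mul continuous_id).tendsto 0
      simpa using h0
    · intro u v Cp
      have h1 := copula_lip Cp.2 u v
      rw [Real.dist_eq]
      refine h1.trans ?_
      have hb : ∀ k, |((u k : ℝ)) - ((v k : ℝ))| ≤ dist u v := fun k => by
        have := dist_le_pi_dist u v k
        rwa [Subtype.dist_eq, Real.dist_eq] at this
      calc ∑ k, |((u k : ℝ)) - ((v k : ℝ))| ≤ ∑ _k : Fin d, dist u v :=
            Finset.sum_le_sum fun k _ => hb k
        _ = (d : ℝ) * dist u v := by
            simp [Finset.sum_const, Finset.card_univ, nsmul_eq_mul]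
  have hind : IsInducing (UniformFun.ofFun ∘ fun Cp : P => (Cp : Cube d → ℝ)) :=
    heq.inducing_uniformFun_iff_pi.mpr IsInducing.subtypeVal
  have hrange : (UniformFun.ofFun '' P : Set (UniformFun (Cube d) ℝ)) =
      Set.range (UniformFun.ofFun ∘ fun Cp : P => (Cp : Cube d → ℝ)) := by
    rw [Set.range_comp, Subtype.range_coe]
  rw [hPdef] at hrange ⊢
  rw [hrange]
  exact isCompact_range hind.continuous

lemma continuous_eval_uf (u : Cube d) :
    Continuous (fun E : UniformFun (Cube d) ℝ => UniformFun.toFun E u) :=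
  (UniformFun.uniformContinuous_eval ℝ u).continuous

lemma continuous_survival_uf (u : Cube d) :
    Continuous (fun E : UniformFun (Cube d) ℝ => survival (UniformFun.toFun E) u) := by
  unfold survival nuK
  exact continuous_finset_sum _ fun L _ => continuous_const.mul (continuous_eval_uf _)

lemma ucg_uniformFun :
    Filter.IsCountablyGenerated (uniformity (UniformFun (Cube d) ℝ)) := by
  obtain ⟨V, hV⟩ := Filter.exists_antitone_basis (uniformity ℝ)
  exact (UniformFun.hasBasis_uniformity_of_basis (Cube d) ℝ hV.toHasBasis).isCountablyGenerated

lemma concLE_refl (C : Cube d → ℝ) : ConcLE C C :=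
  ⟨fun _ => le_rfl, fun _ => le_rfl⟩

lemma concLE_trans {A B C : Cube d → ℝ} (h1 : ConcLE A B) (h2 : ConcLE B C) : ConcLE A C :=
  ⟨fun u => (h1.1 u).trans (h2.1 u), fun u => (h1.2 u).trans (h2.2 u)⟩

end Topology
lemma key_min {d : ℕ} (_hd : 2 ≤ d) (κ : (Cube d → ℝ) → ℝ)
    (hκc : ContinuousFunctional κ) (hκm : ConcPreserving κ)
    (𝒟 : Set (Cube d → ℝ)) (h𝒟cop : ∀ C ∈ 𝒟, IsCopula C) (h𝒟ne : 𝒟.Nonempty)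
    (h𝒟cpt : IsCompact (UniformFun.ofFun '' 𝒟 : Set (UniformFun (Cube d) ℝ))) :
    ∃ C ∈ MinSet κ 𝒟, ∀ E ∈ 𝒟, ConcLE E C → E = C := by
  classical
  haveI : Filter.IsCountablyGenerated (uniformity (UniformFun (Cube d) ℝ)) :=
    ucg_uniformFun
  set 𝒟' : Set (UniformFun (Cube d) ℝ) := UniformFun.ofFun '' 𝒟 with h𝒟'def
  haveI : CompactSpace 𝒟' := isCompact_iff_compactSpace.mp h𝒟cpt
  have hmem : ∀ E : UniformFun (Cube d) ℝ, E ∈ 𝒟' → UniformFun.toFun E ∈ 𝒟 := by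
    rintro E ⟨g, hg, rfl⟩
    simpa using hg
  -- κ is continuous on 𝒟'
  have hκcont : Continuous (fun E : 𝒟' => κ (UniformFun.toFun E.1)) := by
    rw [continuous_iff_seqContinuous]
    intro x p hx
    have hx' : Filter.Tendsto (fun n => (x n).1) Filter.atTop (nhds p.1) :=
      (continuous_subtype_val.tendsto p).comp hx
    rw [UniformFun.tendsto_iff_tendstoUniformly] at hx'
    exact hκc (fun n => UniformFun.toFun ((x n).1)) (UniformFun.toFun p.1)
      (fun n => h𝒟cop _ (hmem _ (x n).2)) (h𝒟cop _ (hmem _ p.2)) hx'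
  -- existence of a minimizer
  have h𝒟'ne : (Set.univ : Set 𝒟').Nonempty := by
    obtain ⟨w, hw⟩ := h𝒟ne
    exact ⟨⟨UniformFun.ofFun w, Set.mem_image_of_mem _ hw⟩, Set.mem_univ _⟩
  obtain ⟨x₀, -, hx₀min⟩ :=
    isCompact_univ.exists_isMinOn h𝒟'ne hκcont.continuousOn
  set c : ℝ := κ (UniformFun.toFun x₀.1) with hcdef
  have hlb : ∀ g ∈ 𝒟, c ≤ κ g := by
    intro g hg
    have := hx₀min (Set.mem_univ (⟨UniformFun.ofFun g, Set.mem_image_of_mem _ hg⟩ : 𝒟'))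
    simpa using this
  have hinf : sInf (κ '' 𝒟) = c := by
    apply le_antisymm
    · exact csInf_le ⟨c, by rintro y ⟨g, hg, rfl⟩; exact hlb g hg⟩
        ⟨UniformFun.toFun x₀.1, hmem _ x₀.2, rfl⟩
    · exact le_csInf ⟨c, ⟨UniformFun.toFun x₀.1, hmem _ x₀.2, rfl⟩⟩
        (by rintro y ⟨g, hg, rfl⟩; exact hlb g hg)
  -- the set of minimizers, inside 𝒟'
  set S : Set 𝒟' := {x | κ (UniformFun.toFun x.1) = c} with hSdef
  have hSclosed : IsClosed S := isClosed_singleton.preimage hκcont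
  have hx₀S : x₀ ∈ S := rfl
  -- Zorn's lemma on S with the reversed concordance order
  let r : S → S → Prop := fun a b =>
    ConcLE (UniformFun.toFun b.1.1) (UniformFun.toFun a.1.1)
  have htrans : ∀ {a b e : S}, r a b → r b e → r a e := by
    intro a b e h1 h2
    exact concLE_trans h2 h1
  have hchains : ∀ ch : Set S, IsChain r ch → ∃ ub, ∀ a ∈ ch, r a ub := by
    intro ch hch
    rcases ch.eq_empty_or_nonempty with rfl | ⟨a₀, ha₀⟩
    · exact ⟨⟨x₀, hx₀S⟩, by simp⟩
    · haveI : Nonempty ch := ⟨⟨a₀, ha₀⟩⟩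
      set Z : ch → Set 𝒟' := fun a =>
        {x : 𝒟' | x ∈ S ∧ ConcLE (UniformFun.toFun x.1) (UniformFun.toFun a.1.1.1)} with hZdef
      have hZclosed : ∀ a, IsClosed (Z a) := by
        intro a
        have h2 : IsClosed {x : 𝒟' | ConcLE (UniformFun.toFun x.1)
            (UniformFun.toFun a.1.1.1)} := by
          have e : {x : 𝒟' | ConcLE (UniformFun.toFun x.1) (UniformFun.toFun a.1.1.1)} =
              (⋂ u, {x : 𝒟' | UniformFun.toFun x.1 u ≤ UniformFun.toFun a.1.1.1 u}) ∩
              (⋂ u, {x : 𝒟' | survival (UniformFun.toFun x.1) u ≤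
                survival (UniformFun.toFun a.1.1.1) u}) := by
            ext x
            simp only [Set.mem_setOf_eq, Set.mem_inter_iff, Set.mem_iInter]
            exact Iff.rfl
          rw [e]
          refine IsClosed.inter ?_ ?_
          · refine isClosed_iInter fun u => ?_
            exact isClosed_le ((continuous_eval_uf u).comp continuous_subtype_val)
              continuous_const
          · refine isClosed_iInter fun u => ?_
            exact isClosed_le ((continuous_survival_uf u).comp continuous_subtype_val)
              continuous_const
        exact hSclosed.inter h2
      have hZne : ∀ a, (Z a).Nonempty := fun a =>
        ⟨a.1.1, ⟨a.1.2, concLE_refl _⟩⟩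
      have hZcpt : ∀ a, IsCompact (Z a) := fun a => (hZclosed a).isCompact
      have hZdir : Directed (· ⊇ ·) Z := by
        intro a b
        rcases eq_or_ne a b with rfl | hab
        · exact ⟨a, subset_rfl, subset_rfl⟩
        · have hab' : a.1 ≠ b.1 := fun h => hab (Subtype.ext h)
          rcases hch a.2 b.2 hab' with h | h
          · -- r a b : ConcLE (fn b) (fn a), so Z b ⊆ Z a
            refine ⟨b, ?_, subset_rfl⟩
            intro x hx
            exact ⟨hx.1, concLE_trans hx.2 h⟩
          · refine ⟨a, subset_rfl, ?_⟩
            intro x hx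
            exact ⟨hx.1, concLE_trans hx.2 h⟩
      obtain ⟨x, hx⟩ :=
        IsCompact.nonempty_iInter_of_directed_nonempty_isCompact_isClosed Z hZdir hZne
          hZcpt hZclosed
      rw [Set.mem_iInter] at hx
      have hxS : x ∈ S := (hx ⟨a₀, ha₀⟩).1
      refine ⟨⟨x, hxS⟩, ?_⟩
      intro a ha
      exact (hx ⟨a, ha⟩).2
  obtain ⟨m, hm⟩ := exists_maximal_of_chains_bounded hchains (fun {a b e} => htrans)
  -- conclusion
  set Cm : Cube d → ℝ := UniformFun.toFun m.1.1 with hCm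
  have hCm𝒟 : Cm ∈ 𝒟 := hmem _ m.1.2
  refine ⟨Cm, ⟨hCm𝒟, by rw [hinf]; exact m.2⟩, ?_⟩
  intro E hE hEC
  have hEcop := h𝒟cop E hE
  have hCmcop := h𝒟cop Cm hCm𝒟
  have hκE : κ E = c := le_antisymm (by
      have h1 : κ E ≤ κ Cm := hκm E Cm hEcop hCmcop hEC
      have h2 : κ Cm = c := m.2
      linarith) (hlb E hE)
  have hES : (⟨UniformFun.ofFun E, Set.mem_image_of_mem _ hE⟩ : 𝒟') ∈ S := by
    simpa [hSdef] using hκE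
  set a : S := ⟨⟨UniformFun.ofFun E, Set.mem_image_of_mem _ hE⟩, hES⟩ with hadef
  have hra : r m a := by
    show ConcLE (UniformFun.toFun (UniformFun.ofFun E)) Cm
    simpa using hEC
  have hmr := hm a hra
  have hrev : ConcLE Cm E := by
    have : ConcLE (UniformFun.toFun m.1.1) (UniformFun.toFun (UniformFun.ofFun E)) := hmr
    simpa using this
  funext u
  exact le_antisymm (hEC.1 u) (hrev.1 u)
/-- A continuous, concordance order preserving functional attains its infimum over any
nonempty compact set of copulas at some minimal element of that set; in particular its set
of minimizers over all copulas contains a minimal copula. -/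
theorem stmt13 (d : ℕ) (hd : 2 ≤ d) (κ : (Cube d → ℝ) → ℝ)
    (hκc : ContinuousFunctional κ) (hκm : ConcPreserving κ)
    (𝒟 : Set (Cube d → ℝ))
    (h𝒟cop : ∀ C ∈ 𝒟, IsCopula C) (h𝒟ne : 𝒟.Nonempty)
    (h𝒟cpt : IsCompact (UniformFun.ofFun '' 𝒟 : Set (UniformFun (Cube d) ℝ))) :
    (∃ C ∈ MinSet κ 𝒟, ∀ E ∈ 𝒟, ConcLE E C → E = C) ∧
    (∃ C ∈ MinSet κ {C : Cube d → ℝ | IsCopula C}, IsMinimalCopula C) := by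
  constructor
  · exact key_min hd κ hκc hκm 𝒟 h𝒟cop h𝒟ne h𝒟cpt
  · have hPne : {C : Cube d → ℝ | IsCopula C}.Nonempty := by
      obtain ⟨w, hw⟩ := h𝒟ne
      exact ⟨w, h𝒟cop w hw⟩
    obtain ⟨C, hCmin, hCmax⟩ := key_min hd κ hκc hκm {C : Cube d → ℝ | IsCopula C}
      (fun _ hC => hC) hPne (isCompact_copulas (by omega))
    exact ⟨C, hCmin, hCmin.1, fun D hD hDC => hCmax D hD hDC⟩
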